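/- Let G be a finite simple graph on vertex set V with symmetric propagation probabilities w(u,v) ∈ [0,1] on pairs of vertices, let P₁, …, P_ℓ be a partition of V, let M be the number of edges of G whose two endpoints lie in different parts (cross edges), and let p_m ∈ [0,1] satisfy w(u,v) ≤ p_m for all pairs u, v. Then for every seed set S ⊆ V, the over-count of the factored influence relative to the true influence is bounded by twice the cross-edge mass: Σ_{x=1}^ℓ I(S ∩ P_x) − I(S) ≤ 2 · p_m · M. -/

import Mathlib

/-- One-round expected influence of a seed set `S` in the vertex set `V`:
`I(S) = |S| + Σ_{v ∈ V∖S} (1 − ∏_{u ∈ S adjacent to v} (1 − w u v))`. -/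
def oneRoundInfluence {α : Type*} [DecidableEq α] (Adj : α → α → Prop)
    [DecidableRel Adj] (w : α → α → ℝ) (V S : Finset α) : ℝ :=
  (S.card : ℝ) +
    ∑ v ∈ V \ S, (1 - ∏ u ∈ S.filter (fun u => Adj u v), (1 - w u v))

/-- Weierstrass-type inequality: `1 - Σ f ≤ Π (1 - f)` for `f` in `[0,1]`. -/
lemma weier_aux {α : Type*} (t : Finset α) (f : α → ℝ)
    (h0 : ∀ i ∈ t, 0 ≤ f i) (h1 : ∀ i ∈ t, f i ≤ 1) :
    1 - ∑ i ∈ t, f i ≤ ∏ i ∈ t, (1 - f i) := by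
  induction t using Finset.cons_induction with
  | empty => simp
  | cons a t ha ih =>
    rw [Finset.sum_cons, Finset.prod_cons]
    have h0a := h0 a (Finset.mem_cons_self a t)
    have h1a := h1 a (Finset.mem_cons_self a t)
    have ih' := ih (fun i hi => h0 i (Finset.mem_cons_of_mem hi))
      (fun i hi => h1 i (Finset.mem_cons_of_mem hi))
    have hsum0 : 0 ≤ ∑ i ∈ t, f i :=
      Finset.sum_nonneg (fun i hi => h0 i (Finset.mem_cons_of_mem hi))
    have hprod0 : 0 ≤ ∏ i ∈ t, (1 - f i) :=
      Finset.prod_nonneg (fun i hi => by linarith [h1 i (Finset.mem_cons_of_mem hi)])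
    nlinarith [mul_le_mul_of_nonneg_left ih' (by linarith : (0:ℝ) ≤ 1 - f a)]

/-- For a finite simple graph `G` on vertex set `V` with symmetric
propagation probabilities `w u v ∈ [0,1]` bounded by `p_m`, a partition `P` of
`V`, and `M` the number of cross edges of `G` (edges whose endpoints lie in
different parts), for every seed set `S ⊆ V`:
`Σₓ I(S ∩ Pₓ) − I(S) ≤ 2 · p_m · M`. -/
theorem influence_overcount_bound {α : Type*} [DecidableEq α]
    (G : SimpleGraph α) [DecidableRel G.Adj]
    (w : α → α → ℝ) (hsymm : ∀ u v, w u v = w v u)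
    (hw0 : ∀ u v, 0 ≤ w u v) (hw1 : ∀ u v, w u v ≤ 1)
    (V : Finset α) (ℓ : ℕ) (P : Fin ℓ → Finset α)
    (hdisj : ∀ x y : Fin ℓ, x ≠ y → Disjoint (P x) (P y))
    (hcover : Finset.univ.biUnion P = V)
    (p_m : ℝ) (hpm : ∀ u v, w u v ≤ p_m) (hpm0 : 0 ≤ p_m) (hpm1 : p_m ≤ 1)
    (M : ℕ)
    (hM : M = ((V.powersetCard 2).filter
        (fun s => (∃ u ∈ s, ∃ v ∈ s, G.Adj u v) ∧ ¬ ∃ x : Fin ℓ, s ⊆ P x)).card)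
    (S : Finset α) (hS : S ⊆ V) :
    (∑ x : Fin ℓ, oneRoundInfluence G.Adj w V (S ∩ P x))
        - oneRoundInfluence G.Adj w V S
      ≤ 2 * p_m * (M : ℝ) := by
  classical
  set g : Finset α → α → ℝ :=
    fun W v => 1 - ∏ u ∈ W.filter (fun u => G.Adj u v), (1 - w u v) with hgdef
  -- cross pair predicate
  set cp : α → α → Prop := fun u v => G.Adj u v ∧ ¬ ∃ x, u ∈ P x ∧ v ∈ P x with hcpdef
  have hprod_le_one : ∀ (W : Finset α) v,
      ∏ u ∈ W.filter (fun u => G.Adj u v), (1 - w u v) ≤ 1 :=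
    fun W v => Finset.prod_le_one (fun u _ => by linarith [hw1 u v])
      (fun u _ => by linarith [hw0 u v])
  have hprod_nonneg : ∀ (W : Finset α) v,
      (0:ℝ) ≤ ∏ u ∈ W.filter (fun u => G.Adj u v), (1 - w u v) :=
    fun W v => Finset.prod_nonneg (fun u _ => by linarith [hw1 u v])
  -- monotonicity of g
  have hg_mono : ∀ (W W' : Finset α) v, W ⊆ W' → g W v ≤ g W' v := by
    intro W W' v h
    have hsub : W.filter (fun u => G.Adj u v) ⊆ W'.filter (fun u => G.Adj u v) :=
      Finset.filter_subset_filter _ h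
    have h1 : ∏ u ∈ W'.filter (fun u => G.Adj u v), (1 - w u v)
        ≤ ∏ u ∈ W.filter (fun u => G.Adj u v), (1 - w u v) := by
      rw [← Finset.prod_sdiff hsub]
      have hA : ∏ u ∈ (W'.filter (fun u => G.Adj u v) \ W.filter (fun u => G.Adj u v)),
          (1 - w u v) ≤ 1 := Finset.prod_le_one (fun u _ => by linarith [hw1 u v])
        (fun u _ => by linarith [hw0 u v])
      have hB : (0:ℝ) ≤ ∏ u ∈ (W'.filter (fun u => G.Adj u v) \ W.filter (fun u => G.Adj u v)),
          (1 - w u v) := Finset.prod_nonneg (fun u _ => by linarith [hw1 u v])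
      nlinarith [hprod_nonneg W v]
    simp only [hgdef]
    linarith
  -- union bound for g
  have hg_le_sum : ∀ (W : Finset α) v,
      g W v ≤ ∑ u ∈ W.filter (fun u => G.Adj u v), w u v := by
    intro W v
    have := weier_aux (W.filter (fun u => G.Adj u v)) (fun u => w u v)
      (fun u _ => hw0 u v) (fun u _ => hw1 u v)
    simp only [hgdef]
    linarith
  -- key: per-part bound by cross pairs
  have key : ∀ (x : Fin ℓ) (v : α), v ∉ P x →
      g (S ∩ P x) v ≤ p_m * (((S ∩ P x).filter (fun u => cp u v)).card : ℝ) := by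
    intro x v hv
    have hsub : (S ∩ P x).filter (fun u => G.Adj u v) ⊆ (S ∩ P x).filter (fun u => cp u v) := by
      intro u hu
      rw [Finset.mem_filter] at hu ⊢
      refine ⟨hu.1, hu.2, ?_⟩
      rintro ⟨y, huy, hvy⟩
      have hux : u ∈ P x := (Finset.mem_inter.mp hu.1).2
      by_cases hxy : x = y
      · exact hv (hxy ▸ hvy)
      · exact Finset.disjoint_left.mp (hdisj x y hxy) hux huy
    calc g (S ∩ P x) v ≤ ∑ u ∈ (S ∩ P x).filter (fun u => G.Adj u v), w u v := hg_le_sum _ _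
      _ ≤ ∑ u ∈ (S ∩ P x).filter (fun u => G.Adj u v), p_m :=
          Finset.sum_le_sum (fun u _ => hpm u v)
      _ = p_m * (((S ∩ P x).filter (fun u => G.Adj u v)).card : ℝ) := by
          rw [Finset.sum_const, nsmul_eq_mul]; ring
      _ ≤ p_m * (((S ∩ P x).filter (fun u => cp u v)).card : ℝ) := by
          apply mul_le_mul_of_nonneg_left _ hpm0
          exact_mod_cast Finset.card_le_card hsub
  -- the per-part cross counts sum to at most the total cross count
  have sum_card : ∀ v : α, ∑ x : Fin ℓ, (((S ∩ P x).filter (fun u => cp u v)).card : ℝ)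
      ≤ ((S.filter (fun u => cp u v)).card : ℝ) := by
    intro v
    have hd : ∀ x ∈ (Finset.univ : Finset (Fin ℓ)), ∀ y ∈ (Finset.univ : Finset (Fin ℓ)),
        x ≠ y → Disjoint ((S ∩ P x).filter (fun u => cp u v))
          ((S ∩ P y).filter (fun u => cp u v)) := by
      intro x _ y _ hxy
      exact ((hdisj x y hxy).mono Finset.inter_subset_right Finset.inter_subset_right).mono
        (Finset.filter_subset _ _) (Finset.filter_subset _ _)
    have := Finset.card_biUnion hd
    have hsub : (Finset.univ.biUnion fun x => (S ∩ P x).filter (fun u => cp u v))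
        ⊆ S.filter (fun u => cp u v) := by
      intro u hu
      rw [Finset.mem_biUnion] at hu
      obtain ⟨x, -, hu⟩ := hu
      rw [Finset.mem_filter] at hu ⊢
      exact ⟨(Finset.mem_inter.mp hu.1).1, hu.2⟩
    have hle := Finset.card_le_card hsub
    rw [this] at hle
    exact_mod_cast hle
  -- every v ∈ V lies in some part
  have hmem_part : ∀ v ∈ V, ∃ x : Fin ℓ, v ∈ P x := by
    intro v hv
    rw [← hcover] at hv
    simpa using Finset.mem_biUnion.mp hv
  -- cardinalities add up
  have hS' : S = Finset.univ.biUnion (fun x => S ∩ P x) := by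
    ext v
    simp only [Finset.mem_biUnion, Finset.mem_inter, Finset.mem_univ, true_and]
    constructor
    · intro hv
      obtain ⟨x, hx⟩ := hmem_part v (hS hv)
      exact ⟨x, hv, hx⟩
    · rintro ⟨x, hv, -⟩; exact hv
  have hcardsum : ∑ x : Fin ℓ, ((S ∩ P x).card : ℝ) = (S.card : ℝ) := by
    have hd : ∀ x ∈ (Finset.univ : Finset (Fin ℓ)), ∀ y ∈ (Finset.univ : Finset (Fin ℓ)),
        x ≠ y → Disjoint (S ∩ P x) (S ∩ P y) := fun x _ y _ hxy =>
      (hdisj x y hxy).mono Finset.inter_subset_right Finset.inter_subset_right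
    have h := Finset.card_biUnion hd
    rw [← hS'] at h
    rw [← Nat.cast_sum, h]
  -- split the summation domain
  have hsplit : ∀ x : Fin ℓ, ∑ v ∈ V \ (S ∩ P x), g (S ∩ P x) v
      = ∑ v ∈ V \ S, g (S ∩ P x) v + ∑ v ∈ S \ P x, g (S ∩ P x) v := by
    intro x
    have hdisj2 : Disjoint (V \ S) (S \ P x) :=
      Finset.disjoint_left.mpr fun v hv hv2 =>
        (Finset.mem_sdiff.mp hv).2 (Finset.mem_sdiff.mp hv2).1
    rw [← Finset.sum_union hdisj2]
    apply Finset.sum_congr _ (fun _ _ => rfl)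
    ext v
    simp only [Finset.mem_sdiff, Finset.mem_union, Finset.mem_inter, not_and]
    constructor
    · rintro ⟨hv, h⟩
      by_cases hvS : v ∈ S
      · exact Or.inr ⟨hvS, h hvS⟩
      · exact Or.inl ⟨hv, hvS⟩
    · rintro (⟨hv, hvS⟩ | ⟨hvS, hvP⟩)
      · exact ⟨hv, fun h => absurd h hvS⟩
      · exact ⟨hS hvS, fun _ => hvP⟩
  -- bound for vertices outside S
  have boundA : ∀ v ∈ V \ S, ∑ x : Fin ℓ, g (S ∩ P x) v - g S v
      ≤ p_m * ((S.filter (fun u => cp u v)).card : ℝ) := by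
    intro v hv
    obtain ⟨x0, hx0⟩ := hmem_part v (Finset.mem_sdiff.mp hv).1
    rw [← Finset.add_sum_erase _ _ (Finset.mem_univ x0)]
    have h1 : g (S ∩ P x0) v ≤ g S v := hg_mono _ _ _ Finset.inter_subset_left
    have h2 : ∑ x ∈ Finset.univ.erase x0, g (S ∩ P x) v
        ≤ ∑ x ∈ Finset.univ.erase x0, p_m * (((S ∩ P x).filter (fun u => cp u v)).card : ℝ) := by
      apply Finset.sum_le_sum
      intro x hx
      have hxne : x ≠ x0 := (Finset.mem_erase.mp hx).1
      have hvnx : v ∉ P x := fun hvx =>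
        Finset.disjoint_left.mp (hdisj x x0 hxne) hvx hx0
      exact key x v hvnx
    have h3 : ∑ x ∈ Finset.univ.erase x0, p_m * (((S ∩ P x).filter (fun u => cp u v)).card : ℝ)
        ≤ ∑ x : Fin ℓ, p_m * (((S ∩ P x).filter (fun u => cp u v)).card : ℝ) :=
      Finset.sum_le_sum_of_subset_of_nonneg (Finset.erase_subset _ _)
        (fun x _ _ => mul_nonneg hpm0 (Nat.cast_nonneg _))
    have h4 : ∑ x : Fin ℓ, p_m * (((S ∩ P x).filter (fun u => cp u v)).card : ℝ)
        ≤ p_m * ((S.filter (fun u => cp u v)).card : ℝ) := by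
      rw [← Finset.mul_sum]
      exact mul_le_mul_of_nonneg_left (sum_card v) hpm0
    linarith
  -- bound for vertices inside S
  have boundB : ∑ x : Fin ℓ, ∑ v ∈ S \ P x, g (S ∩ P x) v
      ≤ ∑ v ∈ S, p_m * ((S.filter (fun u => cp u v)).card : ℝ) := by
    have h1 : ∀ x : Fin ℓ, ∑ v ∈ S \ P x, g (S ∩ P x) v
        ≤ ∑ v ∈ S, p_m * (((S ∩ P x).filter (fun u => cp u v)).card : ℝ) := by
      intro x
      calc ∑ v ∈ S \ P x, g (S ∩ P x) v
          ≤ ∑ v ∈ S \ P x, p_m * (((S ∩ P x).filter (fun u => cp u v)).card : ℝ) :=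
            Finset.sum_le_sum (fun v hv => key x v (Finset.mem_sdiff.mp hv).2)
        _ ≤ ∑ v ∈ S, p_m * (((S ∩ P x).filter (fun u => cp u v)).card : ℝ) :=
            Finset.sum_le_sum_of_subset_of_nonneg (Finset.sdiff_subset)
              (fun v _ _ => mul_nonneg hpm0 (Nat.cast_nonneg _))
    calc ∑ x : Fin ℓ, ∑ v ∈ S \ P x, g (S ∩ P x) v
        ≤ ∑ x : Fin ℓ, ∑ v ∈ S, p_m * (((S ∩ P x).filter (fun u => cp u v)).card : ℝ) :=
          Finset.sum_le_sum (fun x _ => h1 x)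
      _ = ∑ v ∈ S, ∑ x : Fin ℓ, p_m * (((S ∩ P x).filter (fun u => cp u v)).card : ℝ) :=
          Finset.sum_comm
      _ ≤ ∑ v ∈ S, p_m * ((S.filter (fun u => cp u v)).card : ℝ) := by
          apply Finset.sum_le_sum
          intro v _
          rw [← Finset.mul_sum]
          exact mul_le_mul_of_nonneg_left (sum_card v) hpm0
  -- counting: total ordered cross pairs ≤ 2M
  have count : ∑ v ∈ V, (S.filter (fun u => cp u v)).card ≤ 2 * M := by
    set E := (V.powersetCard 2).filter
      (fun s => (∃ u ∈ s, ∃ v ∈ s, G.Adj u v) ∧ ¬ ∃ x : Fin ℓ, s ⊆ P x) with hE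
    set A := (V ×ˢ S).filter (fun p => cp p.2 p.1) with hA
    have hAcard : A.card = ∑ v ∈ V, (S.filter (fun u => cp u v)).card := by
      rw [hA, Finset.card_filter, Finset.sum_product]
      exact Finset.sum_congr rfl (fun v _ => (Finset.card_filter _ _).symm)
    have hmaps : ∀ p ∈ A, ({p.1, p.2} : Finset α) ∈ E := by
      intro p hp
      rw [hA, Finset.mem_filter, Finset.mem_product] at hp
      obtain ⟨⟨hv, hu⟩, hadj, hnc⟩ := hp
      have hne : p.1 ≠ p.2 := (G.ne_of_adj hadj).symm
      rw [hE, Finset.mem_filter, Finset.mem_powersetCard]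
      refine ⟨⟨?_, ?_⟩, ⟨p.2, by simp, p.1, by simp, hadj⟩, ?_⟩
      · intro a ha
        rcases Finset.mem_insert.mp ha with h | h
        · exact h ▸ hv
        · exact (Finset.mem_singleton.mp h) ▸ hS hu
      · exact Finset.card_pair hne
      · rintro ⟨x, hx⟩
        exact hnc ⟨x, hx (by simp), hx (by simp)⟩
    have hfiber : ∀ s ∈ E, (A.filter (fun p => ({p.1, p.2} : Finset α) = s)).card ≤ 2 := by
      intro s hsE
      rw [hE, Finset.mem_filter, Finset.mem_powersetCard] at hsE
      obtain ⟨a, b, hab, rfl⟩ := Finset.card_eq_two.mp hsE.1.2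
      have hsub : A.filter (fun p => ({p.1, p.2} : Finset α) = {a, b})
          ⊆ ({(a, b), (b, a)} : Finset (α × α)) := by
        intro p hp
        rw [Finset.mem_filter] at hp
        obtain ⟨hpA, hps⟩ := hp
        rw [hA, Finset.mem_filter] at hpA
        have hne : p.1 ≠ p.2 := (G.ne_of_adj hpA.2.1).symm
        have h1 : p.1 ∈ ({a, b} : Finset α) := hps ▸ (by simp)
        have h2 : p.2 ∈ ({a, b} : Finset α) := hps ▸ (by simp)
        simp only [Finset.mem_insert, Finset.mem_singleton] at h1 h2 ⊢
        rcases h1 with h1 | h1 <;> rcases h2 with h2 | h2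
        · exact absurd (h1.trans h2.symm) hne
        · left; rw [Prod.ext_iff]; exact ⟨h1, h2⟩
        · right; rw [Prod.ext_iff]; exact ⟨h1, h2⟩
        · exact absurd (h1.trans h2.symm) hne
      calc (A.filter (fun p => ({p.1, p.2} : Finset α) = {a, b})).card
          ≤ ({(a, b), (b, a)} : Finset (α × α)).card := Finset.card_le_card hsub
        _ ≤ 2 := Finset.card_insert_le _ _ |>.trans (by simp)
    have := Finset.card_le_mul_card_image_of_maps_to hmaps 2 hfiber
    rw [hAcard] at this
    omega
  -- assemble everything
  simp only [oneRoundInfluence]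
  have hrw : ∑ x : Fin ℓ, ((((S ∩ P x).card : ℝ)) +
        ∑ v ∈ V \ (S ∩ P x), g (S ∩ P x) v)
      = (S.card : ℝ) + ∑ v ∈ V \ S, (∑ x : Fin ℓ, g (S ∩ P x) v)
        + ∑ x : Fin ℓ, ∑ v ∈ S \ P x, g (S ∩ P x) v := by
    rw [Finset.sum_add_distrib, hcardsum]
    rw [Finset.sum_congr rfl (fun x _ => hsplit x), Finset.sum_add_distrib,
      Finset.sum_comm]
    ring
  have hLHS : (∑ x : Fin ℓ, (((S ∩ P x).card : ℝ) +
        ∑ v ∈ V \ (S ∩ P x), g (S ∩ P x) v))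
      - ((S.card : ℝ) + ∑ v ∈ V \ S, g S v)
      = ∑ v ∈ V \ S, (∑ x : Fin ℓ, g (S ∩ P x) v - g S v)
        + ∑ x : Fin ℓ, ∑ v ∈ S \ P x, g (S ∩ P x) v := by
    have hsd : ∑ v ∈ V \ S, (∑ x : Fin ℓ, g (S ∩ P x) v - g S v)
        = ∑ v ∈ V \ S, (∑ x : Fin ℓ, g (S ∩ P x) v) - ∑ v ∈ V \ S, g S v :=
      Finset.sum_sub_distrib _ _
    rw [hrw, hsd]
    ring
  have hfinal : ∑ v ∈ V \ S, (∑ x : Fin ℓ, g (S ∩ P x) v - g S v)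
        + ∑ x : Fin ℓ, ∑ v ∈ S \ P x, g (S ∩ P x) v
      ≤ ∑ v ∈ V, p_m * ((S.filter (fun u => cp u v)).card : ℝ) := by
    have hsplitV : ∑ v ∈ V, p_m * ((S.filter (fun u => cp u v)).card : ℝ)
        = ∑ v ∈ V \ S, p_m * ((S.filter (fun u => cp u v)).card : ℝ)
          + ∑ v ∈ S, p_m * ((S.filter (fun u => cp u v)).card : ℝ) :=
      (Finset.sum_sdiff hS).symm
    rw [hsplitV]
    exact add_le_add (Finset.sum_le_sum boundA) boundB
  have hcount' : ∑ v ∈ V, p_m * ((S.filter (fun u => cp u v)).card : ℝ)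
      ≤ 2 * p_m * (M : ℝ) := by
    rw [← Finset.mul_sum, ← Nat.cast_sum]
    have h2 : ((∑ v ∈ V, (S.filter (fun u => cp u v)).card : ℕ) : ℝ) ≤ ((2 * M : ℕ) : ℝ) :=
      Nat.cast_le.mpr count
    calc p_m * ((∑ v ∈ V, (S.filter (fun u => cp u v)).card : ℕ) : ℝ)
        ≤ p_m * ((2 * M : ℕ) : ℝ) := mul_le_mul_of_nonneg_left h2 hpm0
      _ = 2 * p_m * (M : ℝ) := by push_cast; ring
  calc (∑ x : Fin ℓ, (((S ∩ P x).card : ℝ) + ∑ v ∈ V \ (S ∩ P x), g (S ∩ P x) v))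
      - ((S.card : ℝ) + ∑ v ∈ V \ S, g S v)
      = ∑ v ∈ V \ S, (∑ x : Fin ℓ, g (S ∩ P x) v - g S v)
        + ∑ x : Fin ℓ, ∑ v ∈ S \ P x, g (S ∩ P x) v := hLHS
    _ ≤ ∑ v ∈ V, p_m * ((S.filter (fun u => cp u v)).card : ℝ) := hfinal
    _ ≤ 2 * p_m * (M : ℝ) := hcount'
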